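/- arXiv:2004.02685 — 5 statements merged into one kernel-verified Lean document; each statement's English description precedes it below -/
import Mathlib

section
/- Conservation of mass for the truncated Hermite–Vlasov–Poisson system: if (C_0,…,C_{N_H−1}, E, Φ) is a solution of the truncated Hermite–Vlasov–Poisson system, then the function t ↦ ∫_0^L C_0(t,x) dx is constant in t (equivalently, d/dt ∫_0^L C_0(t,x) dx = 0 for all t ≥ 0); hence the total mass v_th ∫_0^L C_0(t,x) dx is conserved. -/
open MeasureTheory intervalIntegral

/-- Conservation of mass for the truncated Hermite–Vlasov–Poisson system:
the total mass `v_th ∫_0^L C_0(t,x) dx` is conserved in time. -/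
theorem truncated_hermite_vlasov_poisson_mass_conservation
    (L vth ρ0 : ℝ) (NH : ℕ) (hL : 0 < L) (hvth : 0 < vth) (hNH : 3 ≤ NH)
    (C : ℕ → ℝ → ℝ → ℝ) (E Φ : ℝ → ℝ → ℝ)
    -- regularity: each `C n` and `E` are C¹ in (t,x), `Φ` is C¹ and C² in x
    (hC1 : ∀ n, ContDiff ℝ 1 (fun p : ℝ × ℝ => C n p.1 p.2))
    (hE1 : ContDiff ℝ 1 (fun p : ℝ × ℝ => E p.1 p.2))
    (hΦ2 : ContDiff ℝ 2 (fun p : ℝ × ℝ => Φ p.1 p.2))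
    -- L-periodicity in space
    (hCper : ∀ n t, Function.Periodic (fun x => C n t x) L)
    (hEper : ∀ t, Function.Periodic (fun x => E t x) L)
    (hΦper : ∀ t, Function.Periodic (fun x => Φ t x) L)
    -- truncation convention `C_{N_H} = 0` (and beyond)
    (hCtop : ∀ n, NH ≤ n → C n = 0)
    -- the truncated Hermite expansion of the Vlasov equation
    -- (the `n = 0` case of `C (n-1)` is irrelevant since `√0 = 0`)
    (hVlasov : ∀ n, n < NH → ∀ t x,
      deriv (fun s => C n s x) t
        + vth * (Real.sqrt (n + 1) * deriv (fun y => C (n + 1) t y) x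
            + Real.sqrt n * deriv (fun y => C (n - 1) t y) x)
        - (Real.sqrt n / vth) * E t x * C (n - 1) t x = 0)
    -- the electric field and the Poisson equation
    (hE : ∀ t x, E t x = -deriv (fun y => Φ t y) x)
    (hPoisson : ∀ t x, deriv (fun y => E t y) x = vth * C 0 t x - ρ0) :
    ∀ t, 0 ≤ t →
      vth * ∫ x in (0:ℝ)..L, C 0 t x = vth * ∫ x in (0:ℝ)..L, C 0 0 x := by
  intro t ht
  -- partial derivatives
  set Dt : ℕ → ℝ → ℝ → ℝ :=
    fun n s x => fderiv ℝ (fun p : ℝ × ℝ => C n p.1 p.2) (s, x) (1, 0) with hDtdef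
  set Dx : ℕ → ℝ → ℝ → ℝ :=
    fun n s x => fderiv ℝ (fun p : ℝ × ℝ => C n p.1 p.2) (s, x) (0, 1) with hDxdef
  have key : ∀ n (p : ℝ × ℝ), DifferentiableAt ℝ (fun p : ℝ × ℝ => C n p.1 p.2) p :=
    fun n p => ((hC1 n).differentiable one_ne_zero).differentiableAt
  have hDtHas : ∀ n s x, HasDerivAt (fun s' => C n s' x) (Dt n s x) s := by
    intro n s x
    have h1 : HasDerivAt (fun s' : ℝ => (s', x)) ((1 : ℝ), (0 : ℝ)) s :=
      HasDerivAt.prodMk (hasDerivAt_id s) (hasDerivAt_const s x)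
    exact (key n (s, x)).hasFDerivAt.comp_hasDerivAt s h1
  have hDxHas : ∀ n s x, HasDerivAt (fun y => C n s y) (Dx n s x) x := by
    intro n s x
    have h1 : HasDerivAt (fun y : ℝ => (s, y)) ((0 : ℝ), (1 : ℝ)) x :=
      HasDerivAt.prodMk (hasDerivAt_const x s) (hasDerivAt_id x)
    exact (key n (s, x)).hasFDerivAt.comp_hasDerivAt x h1
  have hDtcont : ∀ n, Continuous fun p : ℝ × ℝ => Dt n p.1 p.2 := by
    intro n
    exact (((hC1 n).continuous_fderiv one_ne_zero).clm_apply continuous_const)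
  -- the n = 0 Vlasov equation
  have hkey : ∀ s x, Dt 0 s x = -vth * Dx 1 s x := by
    intro s x
    have h := hVlasov 0 (by omega) s x
    have e1 : deriv (fun s' => C 0 s' x) s = Dt 0 s x := (hDtHas 0 s x).deriv
    have e2 : deriv (fun y => C 1 s y) x = Dx 1 s x := (hDxHas 1 s x).deriv
    simp only [Nat.cast_zero, zero_add, Real.sqrt_one, Real.sqrt_zero, zero_mul, mul_zero,
      add_zero, zero_div, sub_zero, one_mul] at h
    rw [e1, e2] at h
    linarith
  -- FTC in time
  have hFTCt : ∀ x, C 0 t x - C 0 0 x = ∫ s in (0:ℝ)..t, Dt 0 s x := by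
    intro x
    have hcont : Continuous fun s => Dt 0 s x :=
      (hDtcont 0).comp (continuous_id.prodMk continuous_const)
    exact (intervalIntegral.integral_eq_sub_of_hasDerivAt
      (fun s _ => hDtHas 0 s x) (hcont.intervalIntegrable _ _)).symm
  have hDxcont : ∀ n, Continuous fun p : ℝ × ℝ => Dx n p.1 p.2 := by
    intro n
    exact (((hC1 n).continuous_fderiv one_ne_zero).clm_apply continuous_const)
  -- FTC in space, with periodicity: the inner x-integral vanishes
  have hinner : ∀ s, (∫ x in (0:ℝ)..L, Dt 0 s x) = 0 := by
    intro s
    have hcont : Continuous fun x => Dx 1 s x :=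
      (hDxcont 1).comp (continuous_const.prodMk continuous_id)
    have hFTCx : (∫ x in (0:ℝ)..L, Dx 1 s x) = C 1 s L - C 1 s 0 :=
      intervalIntegral.integral_eq_sub_of_hasDerivAt
        (fun x _ => hDxHas 1 s x) (hcont.intervalIntegrable _ _)
    have hper : C 1 s L = C 1 s 0 := by
      have := hCper 1 s 0
      simpa using this
    calc (∫ x in (0:ℝ)..L, Dt 0 s x)
        = ∫ x in (0:ℝ)..L, -vth * Dx 1 s x := by
          refine intervalIntegral.integral_congr fun x _ => hkey s x
      _ = -vth * ∫ x in (0:ℝ)..L, Dx 1 s x := intervalIntegral.integral_const_mul _ _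
      _ = 0 := by rw [hFTCx, hper]; ring
  -- Fubini
  have hswap : (∫ x in (0:ℝ)..L, ∫ s in (0:ℝ)..t, Dt 0 s x)
      = ∫ s in (0:ℝ)..t, ∫ x in (0:ℝ)..L, Dt 0 s x := by
    have hcont2 : Continuous fun q : ℝ × ℝ => Dt 0 q.2 q.1 :=
      (hDtcont 0).comp (continuous_snd.prodMk continuous_fst)
    have hint : Integrable (Function.uncurry fun x s => Dt 0 s x)
        ((volume.restrict (Set.Ioc (0:ℝ) L)).prod (volume.restrict (Set.Ioc (0:ℝ) t))) := by
      rw [Measure.prod_restrict]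
      have hbig : IntegrableOn (fun q : ℝ × ℝ => Dt 0 q.2 q.1)
          (Set.Icc (0:ℝ) L ×ˢ Set.Icc (0:ℝ) t) (volume.prod volume) :=
        hcont2.continuousOn.integrableOn_compact (isCompact_Icc.prod isCompact_Icc)
      exact hbig.mono_set (Set.prod_mono Set.Ioc_subset_Icc_self Set.Ioc_subset_Icc_self)
    have := MeasureTheory.integral_integral_swap hint
    simpa [intervalIntegral.integral_of_le hL.le, intervalIntegral.integral_of_le ht,
      Function.uncurry] using this
  have hdiff : (∫ x in (0:ℝ)..L, C 0 t x) - (∫ x in (0:ℝ)..L, C 0 0 x) = 0 := by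
    have hi1 : IntervalIntegrable (fun x => C 0 t x) volume 0 L :=
      ((hC1 0).continuous.comp (continuous_const.prodMk continuous_id)).intervalIntegrable _ _
    have hi2 : IntervalIntegrable (fun x => C 0 0 x) volume 0 L :=
      ((hC1 0).continuous.comp (continuous_const.prodMk continuous_id)).intervalIntegrable _ _
    calc (∫ x in (0:ℝ)..L, C 0 t x) - (∫ x in (0:ℝ)..L, C 0 0 x)
        = ∫ x in (0:ℝ)..L, (C 0 t x - C 0 0 x) :=
          (intervalIntegral.integral_sub hi1 hi2).symm
      _ = ∫ x in (0:ℝ)..L, ∫ s in (0:ℝ)..t, Dt 0 s x :=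
          intervalIntegral.integral_congr fun x _ => hFTCt x
      _ = ∫ s in (0:ℝ)..t, ∫ x in (0:ℝ)..L, Dt 0 s x := hswap
      _ = ∫ s in (0:ℝ)..t, (0:ℝ) := intervalIntegral.integral_congr fun s _ => hinner s
      _ = 0 := by simp
  have : (∫ x in (0:ℝ)..L, C 0 t x) = ∫ x in (0:ℝ)..L, C 0 0 x := by linarith
  rw [this]
end

section
/- Conservation of momentum for the truncated Hermite–Vlasov–Poisson system: if (C_0,…,C_{N_H−1}, E, Φ) is a solution of the truncated Hermite–Vlasov–Poisson system, then the function t ↦ ∫_0^L C_1(t,x) dx is constant in t (equivalently, d/dt ∫_0^L C_1(t,x) dx = 0 for all t ≥ 0); hence the momentum v_th² ∫_0^L C_1(t,x) dx is conserved. -/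
open MeasureTheory intervalIntegral

lemma hasDerivAt_fst (f : ℝ × ℝ → ℝ) (hf : ContDiff ℝ 1 f) (t x : ℝ) :
    HasDerivAt (fun s => f (s, x)) (fderiv ℝ f (t, x) (1, 0)) t :=
  (hf.differentiable one_ne_zero (t,x)).hasFDerivAt.comp_hasDerivAt t
    ((hasDerivAt_id t).prodMk (hasDerivAt_const t x))

lemma hasDerivAt_snd (f : ℝ × ℝ → ℝ) (hf : ContDiff ℝ 1 f) (t x : ℝ) :
    HasDerivAt (fun y => f (t, y)) (fderiv ℝ f (t, x) (0, 1)) x :=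
  (hf.differentiable one_ne_zero (t,x)).hasFDerivAt.comp_hasDerivAt x
    ((hasDerivAt_const x t).prodMk (hasDerivAt_id x))

/-- Conservation of momentum for the truncated Hermite–Vlasov–Poisson system:
the momentum `v_th² ∫_0^L C_1(t,x) dx` is conserved in time. -/
theorem truncated_hermite_vlasov_poisson_momentum_conservation
    (L vth ρ0 : ℝ) (NH : ℕ) (hL : 0 < L) (hvth : 0 < vth) (hNH : 3 ≤ NH)
    (C : ℕ → ℝ → ℝ → ℝ) (E Φ : ℝ → ℝ → ℝ)
    -- regularity: each `C n` and `E` are C¹ in (t,x), `Φ` is C¹ and C² in x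
    (hC1 : ∀ n, ContDiff ℝ 1 (fun p : ℝ × ℝ => C n p.1 p.2))
    (hE1 : ContDiff ℝ 1 (fun p : ℝ × ℝ => E p.1 p.2))
    (hΦ2 : ContDiff ℝ 2 (fun p : ℝ × ℝ => Φ p.1 p.2))
    -- L-periodicity in space
    (hCper : ∀ n t, Function.Periodic (fun x => C n t x) L)
    (hEper : ∀ t, Function.Periodic (fun x => E t x) L)
    (hΦper : ∀ t, Function.Periodic (fun x => Φ t x) L)
    -- truncation convention `C_{N_H} = 0` (and beyond)
    (hCtop : ∀ n, NH ≤ n → C n = 0)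
    -- the truncated Hermite expansion of the Vlasov equation
    -- (the `n = 0` case of `C (n-1)` is irrelevant since `√0 = 0`)
    (hVlasov : ∀ n, n < NH → ∀ t x,
      deriv (fun s => C n s x) t
        + vth * (Real.sqrt (n + 1) * deriv (fun y => C (n + 1) t y) x
            + Real.sqrt n * deriv (fun y => C (n - 1) t y) x)
        - (Real.sqrt n / vth) * E t x * C (n - 1) t x = 0)
    -- the electric field and the Poisson equation
    (hE : ∀ t x, E t x = -deriv (fun y => Φ t y) x)
    (hPoisson : ∀ t x, deriv (fun y => E t y) x = vth * C 0 t x - ρ0) :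
    ∀ t, 0 ≤ t →
      vth ^ 2 * ∫ x in (0:ℝ)..L, C 1 t x = vth ^ 2 * ∫ x in (0:ℝ)..L, C 1 0 x := by
  intro t ht
  have hvth' : vth ≠ 0 := ne_of_gt hvth
  -- the time derivative of C 1, as a continuous function of (t,x)
  set D : ℝ → ℝ → ℝ := fun s x => fderiv ℝ (fun p : ℝ × ℝ => C 1 p.1 p.2) (s, x) (1, 0)
    with hD
  have hDt : ∀ s x, HasDerivAt (fun s => C 1 s x) (D s x) s := fun s x =>
    hasDerivAt_fst _ (hC1 1) s x
  have hDcont : Continuous (fun p : ℝ × ℝ => D p.1 p.2) :=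
    ((hC1 1).continuous_fderiv one_ne_zero).clm_apply continuous_const
  -- spatial antiderivative of D s ·
  have hΦ1 : ContDiff ℝ 1 (fun p : ℝ × ℝ => Φ p.1 p.2) := hΦ2.of_le one_le_two
  have key : ∀ s, ∫ x in (0:ℝ)..L, D s x = 0 := by
    intro s
    set G : ℝ → ℝ := fun x => -(vth * Real.sqrt 2) * C 2 s x - vth * C 0 s x
      + (1 / vth ^ 2) * ((E s x) ^ 2 / 2 - ρ0 * Φ s x) with hG
    have hGd : ∀ x ∈ Set.uIcc (0:ℝ) L, HasDerivAt G (D s x) x := by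
      intro x _
      have h2 : HasDerivAt (fun y => C 2 s y) (deriv (fun y => C 2 s y) x) x := by
        have := hasDerivAt_snd _ (hC1 2) s x
        exact this.deriv ▸ this
      have h0 : HasDerivAt (fun y => C 0 s y) (deriv (fun y => C 0 s y) x) x := by
        have := hasDerivAt_snd _ (hC1 0) s x
        exact this.deriv ▸ this
      have hEd : HasDerivAt (fun y => E s y) (vth * C 0 s x - ρ0) x := by
        have h := hasDerivAt_snd _ hE1 s x
        have heq : fderiv ℝ (fun p : ℝ × ℝ => E p.1 p.2) (s, x) (0, 1)
            = vth * C 0 s x - ρ0 := by rw [← hPoisson s x, ← h.deriv]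
        exact heq ▸ h
      have hΦd : HasDerivAt (fun y => Φ s y) (-(E s x)) x := by
        have h := hasDerivAt_snd _ hΦ1 s x
        have heq : fderiv ℝ (fun p : ℝ × ℝ => Φ p.1 p.2) (s, x) (0, 1) = -(E s x) := by
          rw [← h.deriv]; have := hE s x; linarith
        exact heq ▸ h
      have hG' : HasDerivAt G
          (-(vth * Real.sqrt 2) * deriv (fun y => C 2 s y) x
            - vth * deriv (fun y => C 0 s y) x
            + (1 / vth ^ 2) * ((E s x) * (vth * C 0 s x - ρ0) - ρ0 * (-(E s x)))) x := by
        have hsq : HasDerivAt (fun y => (E s y) ^ 2 / 2) ((E s x) * (vth * C 0 s x - ρ0)) x := by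
          have h := ((hEd.pow 2).div_const 2)
          exact h.congr_deriv (by push_cast; ring)
        exact ((h2.const_mul _).sub (h0.const_mul vth)).add
          ((hsq.sub (hΦd.const_mul ρ0)).const_mul (1 / vth ^ 2))
      have hv := hVlasov 1 (by omega) s x
      have hDval : D s x = deriv (fun s => C 1 s x) s := ((hDt s x).deriv).symm
      push_cast at hv
      rw [Real.sqrt_one, show (1:ℝ) + 1 = 2 by norm_num] at hv
      have hA : deriv (fun s => C 1 s x) s
          = -(vth * (Real.sqrt 2 * deriv (fun y => C 2 s y) x
              + 1 * deriv (fun y => C 0 s y) x)) + 1 / vth * E s x * C 0 s x := by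
        linarith [hv]
      convert hG' using 1
      rw [hDval, hA]
      field_simp
      ring
    have hGper : G L = G 0 := by
      have h2 := hCper 2 s 0
      have h0 := hCper 0 s 0
      have hEp := hEper s 0
      have hΦp := hΦper s 0
      simp only [zero_add] at h2 h0 hEp hΦp
      simp only [hG, h2, h0, hEp, hΦp]
    have hint : IntervalIntegrable (fun x => D s x) volume 0 L :=
      (hDcont.comp (continuous_const.prodMk continuous_id)).intervalIntegrable 0 L
    rw [intervalIntegral.integral_eq_sub_of_hasDerivAt hGd hint, hGper, sub_self]
  -- fundamental theorem of calculus in time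
  have hFTC : ∀ x, C 1 t x - C 1 0 x = ∫ s in (0:ℝ)..t, D s x := by
    intro x
    rw [intervalIntegral.integral_eq_sub_of_hasDerivAt (fun s _ => hDt s x)
      ((hDcont.comp (continuous_id.prodMk continuous_const)).intervalIntegrable 0 t)]
  -- integrability of things
  have hC1cont : ∀ s, Continuous (fun x => C 1 s x) :=
    fun s => (hC1 1).continuous.comp (continuous_const.prodMk continuous_id)
  have hi1 : IntervalIntegrable (fun x => C 1 t x) volume 0 L :=
    (hC1cont t).intervalIntegrable 0 L
  have hi0 : IntervalIntegrable (fun x => C 1 0 x) volume 0 L :=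
    (hC1cont 0).intervalIntegrable 0 L
  -- main computation
  have hmain : (∫ x in (0:ℝ)..L, C 1 t x) - ∫ x in (0:ℝ)..L, C 1 0 x = 0 := by
    rw [← intervalIntegral.integral_sub hi1 hi0]
    have : ∫ x in (0:ℝ)..L, (C 1 t x - C 1 0 x)
        = ∫ x in (0:ℝ)..L, ∫ s in (0:ℝ)..t, D s x := by
      apply intervalIntegral.integral_congr
      intro x _
      exact hFTC x
    rw [this]
    -- Fubini
    have hInt : Integrable (Function.uncurry fun x s => D s x)
        ((volume.restrict (Set.Ioc (0:ℝ) L)).prod (volume.restrict (Set.Ioc (0:ℝ) t))) := by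
      rw [Measure.prod_restrict]
      apply (ContinuousOn.integrableOn_compact (IsCompact.prod isCompact_Icc isCompact_Icc)
        (Continuous.continuousOn
          (hDcont.comp (continuous_snd.prodMk continuous_fst)))).mono_set
      exact Set.prod_mono Set.Ioc_subset_Icc_self Set.Ioc_subset_Icc_self
    have hswap := MeasureTheory.integral_integral_swap hInt
    rw [intervalIntegral.integral_of_le hL.le]
    simp_rw [intervalIntegral.integral_of_le ht]
    rw [hswap]
    have hzero : ∀ s, ∫ x in Set.Ioc (0:ℝ) L, D s x = 0 := fun s => by
      rw [← intervalIntegral.integral_of_le hL.le]; exact key s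
    simp [hzero]
  have : (∫ x in (0:ℝ)..L, C 1 t x) = ∫ x in (0:ℝ)..L, C 1 0 x := by linarith
  rw [this]
end

section
/- Conservation of total energy for the truncated Hermite–Vlasov–Poisson system: if (C_0,…,C_{N_H−1}, E, Φ) is a solution of the truncated Hermite–Vlasov–Poisson system (with E and Φ also C¹ in t and mixed second derivatives of Φ continuous), then the total energy ℰ(t) := (1/2) ∫_0^L [ v_th³ (√2 · C_2(t,x) + C_0(t,x)) + E(t,x)² ] dx is constant in t, i.e. ℰ(t) = ℰ(0) for all t ≥ 0. -/
open MeasureTheory intervalIntegral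

open Metric in
private lemma slice_t_hasDerivAt {f : ℝ × ℝ → ℝ} (hf : ContDiff ℝ 1 f) (t x : ℝ) :
    HasDerivAt (fun s => f (s, x)) (fderiv ℝ f (t, x) (1, 0)) t :=
  (hf.differentiable one_ne_zero (t, x)).hasFDerivAt.comp_hasDerivAt t
    ((hasDerivAt_id t).prodMk (hasDerivAt_const t x))

open Metric in
private lemma slice_t_hasDerivAt' {f : ℝ × ℝ → ℝ} (hf : ContDiff ℝ 1 f) (t x : ℝ) :
    HasDerivAt (fun s => f (s, x)) (deriv (fun s => f (s, x)) t) t := by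
  have h := slice_t_hasDerivAt hf t x
  rwa [← h.deriv] at h

open Metric in
private lemma cont_partial_t {f : ℝ × ℝ → ℝ} (hf : ContDiff ℝ 1 f) :
    Continuous (fun p : ℝ × ℝ => fderiv ℝ f p (1, 0)) :=
  (hf.continuous_fderiv one_ne_zero).clm_apply continuous_const

open Metric in
private lemma hasDerivAt_param_integral {f : ℝ × ℝ → ℝ} (hf : ContDiff ℝ 1 f) (a b t : ℝ) :
    HasDerivAt (fun s => ∫ x in a..b, f (s, x))
      (∫ x in a..b, fderiv ℝ f (t, x) (1, 0)) t := by
  obtain ⟨M, hM⟩ := ((isCompact_closedBall t 1).prod isCompact_uIcc).exists_bound_of_continuousOn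
    (cont_partial_t hf).continuousOn
  refine (intervalIntegral.hasDerivAt_integral_of_dominated_loc_of_deriv_le
    (F := fun s x => f (s, x))
    (F' := fun s x => fderiv ℝ f (s, x) (1, 0)) (bound := fun _ => M) (ball_mem_nhds t one_pos)
    (Filter.Eventually.of_forall fun s =>
      ((hf.continuous.comp (continuous_const.prodMk continuous_id)).aestronglyMeasurable))
    ((hf.continuous.comp (continuous_const.prodMk continuous_id)).intervalIntegrable a b)
    (((cont_partial_t hf).comp (continuous_const.prodMk continuous_id)).aestronglyMeasurable)
    (Filter.Eventually.of_forall fun x hx s hs =>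
      hM _ ⟨ball_subset_closedBall hs, Set.uIoc_subset_uIcc hx⟩)
    intervalIntegrable_const
    (Filter.Eventually.of_forall fun x _ s _ => slice_t_hasDerivAt hf s x)).2

open Metric in
private lemma integral_deriv_periodic (g : ℝ → ℝ) (hg : ContDiff ℝ 1 g) (L : ℝ)
    (hper : Function.Periodic g L) : ∫ x in (0:ℝ)..L, deriv g x = 0 := by
  rw [intervalIntegral.integral_deriv_eq_sub
    (fun x _ => (hg.differentiable one_ne_zero).differentiableAt)
    ((hg.continuous_deriv le_rfl).intervalIntegrable 0 L)]
  have hLg : g L = g 0 := by simpa using hper 0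
  rw [hLg, sub_self]


/-- Conservation of total energy for the truncated Hermite–Vlasov–Poisson system:
`ℰ(t) := (1/2) ∫_0^L [v_th³ (√2 C_2 + C_0) + E²] dx` is conserved in time. -/
theorem truncated_hermite_vlasov_poisson_energy_conservation
    (L vth ρ0 : ℝ) (NH : ℕ) (hL : 0 < L) (hvth : 0 < vth) (hNH : 3 ≤ NH)
    (C : ℕ → ℝ → ℝ → ℝ) (E Φ : ℝ → ℝ → ℝ)
    -- regularity: each `C n` and `E` are C¹ in (t,x), `Φ` is C¹ and C² in x
    (hC1 : ∀ n, ContDiff ℝ 1 (fun p : ℝ × ℝ => C n p.1 p.2))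
    (hE1 : ContDiff ℝ 1 (fun p : ℝ × ℝ => E p.1 p.2))
    (hΦ2 : ContDiff ℝ 2 (fun p : ℝ × ℝ => Φ p.1 p.2))
    -- L-periodicity in space
    (hCper : ∀ n t, Function.Periodic (fun x => C n t x) L)
    (hEper : ∀ t, Function.Periodic (fun x => E t x) L)
    (hΦper : ∀ t, Function.Periodic (fun x => Φ t x) L)
    -- truncation convention `C_{N_H} = 0` (and beyond)
    (hCtop : ∀ n, NH ≤ n → C n = 0)
    -- the truncated Hermite expansion of the Vlasov equation
    -- (the `n = 0` case of `C (n-1)` is irrelevant since `√0 = 0`)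
    (hVlasov : ∀ n, n < NH → ∀ t x,
      deriv (fun s => C n s x) t
        + vth * (Real.sqrt (n + 1) * deriv (fun y => C (n + 1) t y) x
            + Real.sqrt n * deriv (fun y => C (n - 1) t y) x)
        - (Real.sqrt n / vth) * E t x * C (n - 1) t x = 0)
    -- the electric field and the Poisson equation
    (hE : ∀ t x, E t x = -deriv (fun y => Φ t y) x)
    (hPoisson : ∀ t x, deriv (fun y => E t y) x = vth * C 0 t x - ρ0) :
    ∀ t, 0 ≤ t →
      (1 / 2) * ∫ x in (0:ℝ)..L,
          (vth ^ 3 * (Real.sqrt 2 * C 2 t x + C 0 t x) + (E t x) ^ 2)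
        = (1 / 2) * ∫ x in (0:ℝ)..L,
          (vth ^ 3 * (Real.sqrt 2 * C 2 0 x + C 0 0 x) + (E 0 x) ^ 2) := by
  have hvne : vth ≠ 0 := ne_of_gt hvth
  have hCx : ∀ n t, ContDiff ℝ 1 (fun y => C n t y) :=
    fun n t => (hC1 n).comp (contDiff_const.prodMk contDiff_id)
  have hEx : ∀ t, ContDiff ℝ 1 (fun y => E t y) :=
    fun t => hE1.comp (contDiff_const.prodMk contDiff_id)
  have hΦx : ∀ t, ContDiff ℝ 1 (fun y => Φ t y) :=
    fun t => (hΦ2.of_le one_le_two).comp (contDiff_const.prodMk contDiff_id)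
  have hCt : ∀ n t x, HasDerivAt (fun s => C n s x) (deriv (fun s => C n s x) t) t :=
    fun n t x => slice_t_hasDerivAt' (hC1 n) t x
  -- Vlasov n = 0
  have hV0 : ∀ t x, deriv (fun s => C 0 s x) t = -vth * deriv (fun y => C 1 t y) x := by
    intro t x
    have h := hVlasov 0 (by omega) t x
    norm_num at h
    linarith
  -- Vlasov n = 2
  have hV2 : ∀ t x, deriv (fun s => C 2 s x) t
      = -vth * (Real.sqrt 3 * deriv (fun y => C 3 t y) x
          + Real.sqrt 2 * deriv (fun y => C 1 t y) x)
        + (Real.sqrt 2 / vth) * E t x * C 1 t x := by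
    intro t x
    have h := hVlasov 2 (by omega) t x
    norm_num at h
    linarith
  -- time derivative of E
  have hEtform : ∀ t x, HasDerivAt (fun s => E s x)
      (deriv (fun s => E s 0) t - vth ^ 2 * (C 1 t x - C 1 t 0)) t := by
    intro t x
    have hrep : ∀ s, E s x = E s 0 + ∫ y in (0:ℝ)..x, (vth * C 0 s y - ρ0) := by
      intro s
      have hftc : ∫ y in (0:ℝ)..x, deriv (fun y => E s y) y = E s x - E s 0 :=
        intervalIntegral.integral_deriv_eq_sub
          (fun y _ => ((hEx s).differentiable one_ne_zero).differentiableAt)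
          (((hEx s).continuous_deriv le_rfl).intervalIntegrable 0 x)
      have h2 : (∫ y in (0:ℝ)..x, (vth * C 0 s y - ρ0)) = E s x - E s 0 := by
        rw [← hftc]
        exact intervalIntegral.integral_congr fun y _ => (hPoisson s y).symm
      linarith
    have hg : ContDiff ℝ 1 (fun p : ℝ × ℝ => vth * C 0 p.1 p.2 - ρ0) :=
      (contDiff_const.mul (hC1 0)).sub contDiff_const
    have hint := hasDerivAt_param_integral hg 0 x t
    have hcongr : (∫ y in (0:ℝ)..x, fderiv ℝ (fun p : ℝ × ℝ => vth * C 0 p.1 p.2 - ρ0) (t, y) (1, 0))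
        = ∫ y in (0:ℝ)..x, (vth * deriv (fun s => C 0 s y) t) := by
      refine intervalIntegral.integral_congr fun y _ => ?_
      exact (slice_t_hasDerivAt hg t y).unique (((hCt 0 t y).const_mul vth).sub_const ρ0)
    rw [hcongr] at hint
    have hval : (∫ y in (0:ℝ)..x, (vth * deriv (fun s => C 0 s y) t))
        = -(vth ^ 2) * (C 1 t x - C 1 t 0) := by
      rw [intervalIntegral.integral_congr
        (fun y _ => show vth * deriv (fun s => C 0 s y) t
          = -(vth ^ 2) * deriv (fun z => C 1 t z) y by rw [hV0 t y]; ring)]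
      rw [intervalIntegral.integral_const_mul,
        intervalIntegral.integral_deriv_eq_sub
          (fun y _ => ((hCx 1 t).differentiable one_ne_zero).differentiableAt)
          (((hCx 1 t).continuous_deriv le_rfl).intervalIntegrable 0 x)]
    rw [hval] at hint
    have hsum := ((slice_t_hasDerivAt' hE1 t 0).add hint).congr_of_eventuallyEq
      (Filter.Eventually.of_forall hrep)
    refine hsum.congr_deriv ?_
    dsimp only
    ring
  -- the energy integrand
  set F : ℝ × ℝ → ℝ :=
    fun p => vth ^ 3 * (Real.sqrt 2 * C 2 p.1 p.2 + C 0 p.1 p.2) + (E p.1 p.2) ^ 2 with hFdef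
  have hF : ContDiff ℝ 1 F :=
    (contDiff_const.mul ((contDiff_const.mul (hC1 2)).add (hC1 0))).add (hE1.pow 2)
  have hG : ∀ t, HasDerivAt (fun s => ∫ x in (0:ℝ)..L, F (s, x)) 0 t := by
    intro t
    have h := hasDerivAt_param_integral hF 0 L t
    have hptw : ∀ x, fderiv ℝ F (t, x) (1, 0)
        = (-(Real.sqrt 2 * Real.sqrt 3 * vth ^ 4)) * deriv (fun y => C 3 t y) x
          + (-(3 * vth ^ 4)) * deriv (fun y => C 1 t y) x
          + (2 * (deriv (fun s => E s 0) t + vth ^ 2 * C 1 t 0)) * E t x := by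
      intro x
      have hEE := hEtform t x
      have hD : HasDerivAt (fun s => F (s, x))
          (vth ^ 3 * (Real.sqrt 2 * deriv (fun s => C 2 s x) t + deriv (fun s => C 0 s x) t)
            + (2 : ℕ) * E t x ^ 1 * (deriv (fun s => E s 0) t - vth ^ 2 * (C 1 t x - C 1 t 0))) t :=
        ((((hCt 2 t x).const_mul (Real.sqrt 2)).add (hCt 0 t x)).const_mul (vth ^ 3)).add
          (hEE.pow 2)
      have huniq := (slice_t_hasDerivAt hF t x).unique hD
      rw [huniq, hV0 t x, hV2 t x]
      have h22 : Real.sqrt 2 * Real.sqrt 2 = 2 := Real.mul_self_sqrt (by norm_num)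
      push_cast
      field_simp
      ring_nf
      rw [Real.sq_sqrt (by norm_num : (0:ℝ) ≤ 2)]
      ring
    rw [intervalIntegral.integral_congr (fun x _ => hptw x)] at h
    have hc3 : Continuous (deriv (fun y => C 3 t y)) := (hCx 3 t).continuous_deriv le_rfl
    have hc1 : Continuous (deriv (fun y => C 1 t y)) := (hCx 1 t).continuous_deriv le_rfl
    have hcE : Continuous (fun x => E t x) := (hEx t).continuous
    have hi3 : ∫ x in (0:ℝ)..L, deriv (fun y => C 3 t y) x = 0 :=
      integral_deriv_periodic _ (hCx 3 t) L (hCper 3 t)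
    have hi1 : ∫ x in (0:ℝ)..L, deriv (fun y => C 1 t y) x = 0 :=
      integral_deriv_periodic _ (hCx 1 t) L (hCper 1 t)
    have hiE : ∫ x in (0:ℝ)..L, E t x = 0 := by
      rw [intervalIntegral.integral_congr (fun x _ => hE t x),
        intervalIntegral.integral_neg,
        integral_deriv_periodic _ (hΦx t) L (hΦper t), neg_zero]
    rw [intervalIntegral.integral_add
        (((hc3.intervalIntegrable 0 L).const_mul _).add ((hc1.intervalIntegrable 0 L).const_mul _))
        ((hcE.intervalIntegrable 0 L).const_mul _),
      intervalIntegral.integral_add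
        ((hc3.intervalIntegrable 0 L).const_mul _)
        ((hc1.intervalIntegrable 0 L).const_mul _),
      intervalIntegral.integral_const_mul, intervalIntegral.integral_const_mul,
      intervalIntegral.integral_const_mul, hi3, hi1, hiE] at h
    simpa using h
  intro t ht
  have hconst : (fun s => ∫ x in (0:ℝ)..L, F (s, x)) t
      = (fun s => ∫ x in (0:ℝ)..L, F (s, x)) 0 :=
    is_const_of_deriv_eq_zero (fun s => (hG s).differentiableAt) (fun s => (hG s).deriv) t 0
  exact congrArg (fun z => (1 / 2 : ℝ) * z) hconst
end

section
/- Kinetic energy variation identity: if C_0, C_1, C_2, C_3 and E are C¹ functions on [0,∞) × ℝ, L-periodic in x, satisfying ∂_t C_0 + v_th ∂_x C_1 = 0 and ∂_t C_2 + v_th (√3 ∂_x C_3 + √2 ∂_x C_1) − (√2 / v_th) E C_1 = 0, then for all t ≥ 0: (v_th³/2) · d/dt ∫_0^L ( √2 · C_2(t,x) + C_0(t,x) ) dx = v_th² ∫_0^L E(t,x) C_1(t,x) dx. -/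
open MeasureTheory intervalIntegral

lemma partial_t_hasDerivAt (f : ℝ → ℝ → ℝ)
    (hf : ContDiff ℝ 1 (fun p : ℝ × ℝ => f p.1 p.2)) (t x : ℝ) :
    HasDerivAt (fun s => f s x) (fderiv ℝ (fun p : ℝ × ℝ => f p.1 p.2) (t, x) (1, 0)) t := by
  have h1 : HasDerivAt (fun s : ℝ => (s, x)) ((1 : ℝ), (0 : ℝ)) t :=
    (hasDerivAt_id t).prodMk (hasDerivAt_const t x)
  have h2 := ((hf.differentiable one_ne_zero) (t, x)).hasFDerivAt
  exact h2.comp_hasDerivAt t h1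

lemma partial_x_hasDerivAt (f : ℝ → ℝ → ℝ)
    (hf : ContDiff ℝ 1 (fun p : ℝ × ℝ => f p.1 p.2)) (t x : ℝ) :
    HasDerivAt (fun y => f t y) (fderiv ℝ (fun p : ℝ × ℝ => f p.1 p.2) (t, x) (0, 1)) x := by
  have h1 : HasDerivAt (fun y : ℝ => (t, y)) ((0 : ℝ), (1 : ℝ)) x :=
    (hasDerivAt_const x t).prodMk (hasDerivAt_id x)
  exact ((hf.differentiable one_ne_zero) (t, x)).hasFDerivAt.comp_hasDerivAt x h1

lemma partial_x_cont (f : ℝ → ℝ → ℝ)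
    (hf : ContDiff ℝ 1 (fun p : ℝ × ℝ => f p.1 p.2)) (t : ℝ) :
    Continuous (fun x => deriv (fun y => f t y) x) := by
  have : (fun x => deriv (fun y => f t y) x)
      = fun x => fderiv ℝ (fun p : ℝ × ℝ => f p.1 p.2) (t, x) (0, 1) :=
    funext fun x => (partial_x_hasDerivAt f hf t x).deriv
  rw [this]
  exact ((hf.continuous_fderiv one_ne_zero).comp (by fun_prop)).clm_apply continuous_const

lemma integral_partial_x_periodic (f : ℝ → ℝ → ℝ) (L : ℝ)
    (hf : ContDiff ℝ 1 (fun p : ℝ × ℝ => f p.1 p.2))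
    (hper : ∀ t, Function.Periodic (fun x => f t x) L) (t : ℝ) :
    ∫ x in (0:ℝ)..L, deriv (fun y => f t y) x = 0 := by
  have h := integral_deriv_eq_sub (f := fun y => f t y) (a := 0) (b := L)
    (fun x _ => (partial_x_hasDerivAt f hf t x).differentiableAt)
    ((partial_x_cont f hf t).intervalIntegrable 0 L)
  have : f t L = f t 0 := by simpa using (hper t 0)
  simp only [h]
  simp [this]

lemma param_hasDerivAt (f : ℝ → ℝ → ℝ)
    (hf : ContDiff ℝ 1 (fun p : ℝ × ℝ => f p.1 p.2)) (a b t : ℝ) :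
    HasDerivAt (fun s => ∫ x in a..b, f s x)
      (∫ x in a..b, deriv (fun s => f s x) t) t := by
  set F : ℝ × ℝ → ℝ := fun p => f p.1 p.2 with hF
  set f' : ℝ → ℝ → ℝ := fun s x => fderiv ℝ F (s, x) (1, 0) with hf'
  have hkey : ∀ s x, HasDerivAt (fun s => f s x) (f' s x) s :=
    fun s x => partial_t_hasDerivAt f hf s x
  have hcont' : Continuous (fun p : ℝ × ℝ => f' p.1 p.2) := by
    exact ((hf.continuous_fderiv one_ne_zero).comp (by fun_prop)).clm_apply continuous_const
  -- bound on compact set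
  obtain ⟨M, hM⟩ := ((isCompact_closedBall t 1).prod (isCompact_uIcc (a := a) (b := b))).exists_bound_of_continuousOn
    hcont'.continuousOn
  have key := intervalIntegral.hasDerivAt_integral_of_dominated_loc_of_deriv_le
    (F := fun s x => f s x) (F' := fun s x => f' s x) (a := a) (b := b)
    (x₀ := t) (bound := fun _ => M) (s := Metric.ball t 1) (μ := volume) (Metric.ball_mem_nhds t one_pos)
    (Filter.Eventually.of_forall fun s =>
      ((hf.continuous.comp (by fun_prop : Continuous fun x : ℝ => (s, x))).aestronglyMeasurable))
    ((hf.continuous.comp (by fun_prop : Continuous fun x : ℝ => (t, x))).intervalIntegrable a b)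
    ((hcont'.comp (by fun_prop : Continuous fun x : ℝ => (t, x))).aestronglyMeasurable)
    ?_ (intervalIntegrable_const) ?_
  · have heq : (fun x => deriv (fun s => f s x) t) = fun x => f' t x :=
      funext fun x => (hkey t x).deriv
    rw [heq]
    exact key.2
  · filter_upwards with x hx s hs
    exact hM (s, x) ⟨Metric.ball_subset_closedBall hs, Set.uIoc_subset_uIcc hx⟩
  · filter_upwards with x hx s _
    exact hkey s x

/-- Kinetic energy variation identity: if `∂_t C_0 + v_th ∂_x C_1 = 0` and
`∂_t C_2 + v_th(√3 ∂_x C_3 + √2 ∂_x C_1) − (√2/v_th) E C_1 = 0`, then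
`(v_th³/2) d/dt ∫_0^L (√2 C_2 + C_0) dx = v_th² ∫_0^L E C_1 dx`. -/
theorem kinetic_energy_variation
    (L vth : ℝ) (hL : 0 < L) (hvth : 0 < vth)
    (C0 C1 C2 C3 E : ℝ → ℝ → ℝ)
    -- regularity: all functions are C¹ in (t,x)
    (hC0 : ContDiff ℝ 1 (fun p : ℝ × ℝ => C0 p.1 p.2))
    (hC1 : ContDiff ℝ 1 (fun p : ℝ × ℝ => C1 p.1 p.2))
    (hC2 : ContDiff ℝ 1 (fun p : ℝ × ℝ => C2 p.1 p.2))
    (hC3 : ContDiff ℝ 1 (fun p : ℝ × ℝ => C3 p.1 p.2))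
    (hE : ContDiff ℝ 1 (fun p : ℝ × ℝ => E p.1 p.2))
    -- L-periodicity in space
    (hC0per : ∀ t, Function.Periodic (fun x => C0 t x) L)
    (hC1per : ∀ t, Function.Periodic (fun x => C1 t x) L)
    (hC2per : ∀ t, Function.Periodic (fun x => C2 t x) L)
    (hC3per : ∀ t, Function.Periodic (fun x => C3 t x) L)
    (hEper : ∀ t, Function.Periodic (fun x => E t x) L)
    -- the mode equations for `C_0` and `C_2`
    (heq0 : ∀ t x,
      deriv (fun s => C0 s x) t + vth * deriv (fun y => C1 t y) x = 0)
    (heq2 : ∀ t x,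
      deriv (fun s => C2 s x) t
        + vth * (Real.sqrt 3 * deriv (fun y => C3 t y) x
            + Real.sqrt 2 * deriv (fun y => C1 t y) x)
        - (Real.sqrt 2 / vth) * E t x * C1 t x = 0) :
    ∀ t, 0 ≤ t →
      (vth ^ 3 / 2) *
          deriv (fun s => ∫ x in (0:ℝ)..L, (Real.sqrt 2 * C2 s x + C0 s x)) t
        = vth ^ 2 * ∫ x in (0:ℝ)..L, E t x * C1 t x := by
  intro t _
  have hg : ContDiff ℝ 1 (fun p : ℝ × ℝ => Real.sqrt 2 * C2 p.1 p.2 + C0 p.1 p.2) :=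
    (contDiff_const.mul hC2).add hC0
  have hD := param_hasDerivAt (fun s x => Real.sqrt 2 * C2 s x + C0 s x) hg 0 L t
  rw [hD.deriv]
  have h2sq : Real.sqrt 2 * Real.sqrt 2 = 2 := Real.mul_self_sqrt (by norm_num)
  have hpt : ∀ x, deriv (fun s => Real.sqrt 2 * C2 s x + C0 s x) t
      = (2 / vth) * (E t x * C1 t x)
        - (vth * (Real.sqrt 2 * Real.sqrt 3)) * deriv (fun y => C3 t y) x
        - (3 * vth) * deriv (fun y => C1 t y) x := by
    intro x
    have h2 := partial_t_hasDerivAt C2 hC2 t x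
    have h0 := partial_t_hasDerivAt C0 hC0 t x
    have hadd : HasDerivAt (fun s => Real.sqrt 2 * C2 s x + C0 s x) _ t := (h2.const_mul (Real.sqrt 2)).add h0
    rw [hadd.deriv, ← h2.deriv, ← h0.deriv]
    linear_combination Real.sqrt 2 * heq2 t x + heq0 t x
      + (E t x * C1 t x / vth - vth * deriv (fun y => C1 t y) x) * h2sq
  rw [intervalIntegral.integral_congr (g := fun x =>
      (2 / vth) * (E t x * C1 t x)
        - (vth * (Real.sqrt 2 * Real.sqrt 3)) * deriv (fun y => C3 t y) x
        - (3 * vth) * deriv (fun y => C1 t y) x) (fun x _ => hpt x)]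
  have ctx : Continuous fun x : ℝ => (t, x) := by fun_prop
  have iEC : IntervalIntegrable (fun x => (2 / vth) * (E t x * C1 t x)) volume 0 L :=
    (continuous_const.mul ((hE.continuous.comp ctx).mul (hC1.continuous.comp ctx))).intervalIntegrable 0 L
  have i3 : IntervalIntegrable (fun x =>
      (vth * (Real.sqrt 2 * Real.sqrt 3)) * deriv (fun y => C3 t y) x) volume 0 L :=
    (continuous_const.mul (partial_x_cont C3 hC3 t)).intervalIntegrable 0 L
  have i1 : IntervalIntegrable (fun x =>
      (3 * vth) * deriv (fun y => C1 t y) x) volume 0 L :=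
    (continuous_const.mul (partial_x_cont C1 hC1 t)).intervalIntegrable 0 L
  rw [intervalIntegral.integral_sub (iEC.sub i3) i1,
    intervalIntegral.integral_sub iEC i3,
    intervalIntegral.integral_const_mul, intervalIntegral.integral_const_mul,
    intervalIntegral.integral_const_mul,
    integral_partial_x_periodic C3 L hC3 hC3per t,
    integral_partial_x_periodic C1 L hC1 hC1per t]
  field_simp
  ring
end

section
/- Truncation residual identity for the Hermite expansion: let N ≥ 1 and suppose C_0,…,C_{N−1} : [0,∞) × ℝ → ℝ are C¹ functions and E : [0,∞) × ℝ → ℝ is continuous, satisfying (with the conventions C_{−1} = C_N = 0) the mode equations ∂_t C_n + v_th (√(n+1) ∂_x C_{n+1} + √n ∂_x C_{n−1}) − (√n / v_th) E C_{n−1} = 0 for 0 ≤ n ≤ N−1. Define f(t,x,v) = Σ_{n=0}^{N−1} C_n(t,x) Ψ_n(v). Then for all (t,x,v): ∂_t f + v ∂_x f + E(t,x) ∂_v f = √N · ( v_th ∂_x C_{N−1}(t,x) − (1/v_th) E(t,x) C_{N−1}(t,x) ) · Ψ_N(v). In particular, if the mode equations held for all n ∈ ℕ the expansion would solve the Vlasov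 equation exactly. -/
open MeasureTheory

/-- The normalized probabilists' Hermite polynomials, defined by `H_0 = 1`,
`H_1 ξ = ξ` (from `√1·H_1 = ξ·H_0 − √0·H_{−1}`) and
`√n · H_n(ξ) = ξ · H_{n−1}(ξ) − √(n−1) · H_{n−2}(ξ)`. -/
noncomputable def normHermite : ℕ → ℝ → ℝ
  | 0, _ => 1
  | 1, ξ => ξ
  | (n + 2), ξ =>
      (ξ * normHermite (n + 1) ξ - Real.sqrt (n + 1) * normHermite n ξ) /
        Real.sqrt (n + 2)

/-- The asymmetrically weighted Hermite functions
`Ψ_n(v) = H_n(v/v_th) · e^{−v²/(2 v_th²)} / √(2π)`. -/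
noncomputable def Psi (vth : ℝ) (n : ℕ) (v : ℝ) : ℝ :=
  normHermite n (v / vth) * Real.exp (-(v ^ 2) / (2 * vth ^ 2)) / Real.sqrt (2 * Real.pi)


lemma normHermite_rec (n : ℕ) (ξ : ℝ) :
    Real.sqrt (n + 1) * normHermite (n + 1) ξ
      = ξ * normHermite n ξ - Real.sqrt n * normHermite (n - 1) ξ := by
  match n with
  | 0 => simp [normHermite]
  | m + 1 =>
    have h : Real.sqrt ((m : ℝ) + 2) ≠ 0 := by positivity
    simp only [normHermite, Nat.add_sub_cancel]
    push_cast
    rw [show (m : ℝ) + 1 + 1 = (m : ℝ) + 2 by ring, mul_div_cancel₀ _ h]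

lemma normHermite_hasDerivAt : ∀ (n : ℕ) (ξ : ℝ),
    HasDerivAt (normHermite n) (Real.sqrt n * normHermite (n - 1) ξ) ξ
  | 0, ξ => by
    have h : normHermite 0 = fun _ : ℝ => (1 : ℝ) := by funext y; simp [normHermite]
    rw [h]
    simpa using hasDerivAt_const ξ (1 : ℝ)
  | 1, ξ => by
    have h : normHermite 1 = fun y : ℝ => y := by funext y; simp [normHermite]
    rw [h]
    have h1 : normHermite 0 ξ = 1 := by simp [normHermite]
    simpa [h1] using hasDerivAt_id' ξ
  | (n + 2), ξ => by
    have h1 := normHermite_hasDerivAt (n + 1) ξ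
    have h0 := normHermite_hasDerivAt n ξ
    have hfun : normHermite (n + 2) = fun y : ℝ =>
        (y * normHermite (n + 1) y - Real.sqrt (n + 1) * normHermite n y) /
          Real.sqrt (n + 2) := by
      funext y; simp [normHermite]
    rw [hfun]
    have hd := (((hasDerivAt_id ξ).mul h1).sub (h0.const_mul (Real.sqrt (n + 1)))).div_const
      (Real.sqrt (n + 2))
    refine hd.congr_deriv (Eq.symm ?_)
    simp only [Nat.add_sub_cancel, id_eq]
    have hrec := normHermite_rec n ξ
    have hsq : Real.sqrt ((n : ℝ) + 1) * Real.sqrt ((n : ℝ) + 1) = (n : ℝ) + 1 :=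
      Real.mul_self_sqrt (by positivity)
    have h2 : Real.sqrt ((n : ℝ) + 2) * Real.sqrt ((n : ℝ) + 2) = (n : ℝ) + 2 :=
      Real.mul_self_sqrt (by positivity)
    have hne : Real.sqrt ((n : ℝ) + 2) ≠ 0 := by positivity
    push_cast
    rw [eq_div_iff hne]
    linear_combination Real.sqrt ((n : ℝ) + 1) * hrec + normHermite (n + 1) ξ * h2 -
      normHermite (n + 1) ξ * hsq

lemma sqrt_two_pi_ne : Real.sqrt (2 * Real.pi) ≠ 0 := by positivity

lemma Psi_hasDerivAt (vth : ℝ) (hvth : vth ≠ 0) (n : ℕ) (v : ℝ) :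
    HasDerivAt (Psi vth n) (-(Real.sqrt (n + 1) / vth) * Psi vth (n + 1) v) v := by
  have hH : HasDerivAt (fun w => normHermite n (w / vth))
      (Real.sqrt n * normHermite (n - 1) (v / vth) * (1 / vth)) v := by
    have := (normHermite_hasDerivAt n (v / vth)).comp v ((hasDerivAt_id v).div_const vth)
    simpa [Function.comp_def] using this
  have hg : HasDerivAt (fun w : ℝ => Real.exp (-(w ^ 2) / (2 * vth ^ 2)))
      (Real.exp (-(v ^ 2) / (2 * vth ^ 2)) * (-(2 * v) / (2 * vth ^ 2))) v := by
    have h1 : HasDerivAt (fun w : ℝ => -(w ^ 2) / (2 * vth ^ 2)) (-(2 * v) / (2 * vth ^ 2)) v := by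
      have := ((hasDerivAt_pow 2 v).neg.div_const (2 * vth ^ 2))
      simpa using this
    simpa [mul_comm] using h1.exp
  have hd := (hH.mul hg).div_const (Real.sqrt (2 * Real.pi))
  have hfun : Psi vth n = fun w =>
      normHermite n (w / vth) * Real.exp (-(w ^ 2) / (2 * vth ^ 2)) / Real.sqrt (2 * Real.pi) :=
    rfl
  rw [hfun]
  refine hd.congr_deriv (Eq.symm ?_)
  have hrec := normHermite_rec n (v / vth)
  simp only [Psi]
  linear_combination (-(Real.exp (-(v ^ 2) / (2 * vth ^ 2)) / vth / Real.sqrt (2 * Real.pi))) * hrec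

lemma v_mul_Psi (vth : ℝ) (hvth : vth ≠ 0) (n : ℕ) (v : ℝ) :
    v * Psi vth n v = vth * (Real.sqrt (n + 1) * Psi vth (n + 1) v
      + Real.sqrt n * Psi vth (n - 1) v) := by
  have hrec := normHermite_rec n (v / vth)
  have hx : vth * (v / vth) = v := by field_simp
  simp only [Psi]
  linear_combination (-(vth * Real.exp (-(v ^ 2) / (2 * vth ^ 2)) / Real.sqrt (2 * Real.pi))) * hrec
    + (-(normHermite n (v / vth) * Real.exp (-(v ^ 2) / (2 * vth ^ 2)) / Real.sqrt (2 * Real.pi))) * hx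

lemma key_telescope (vth v Ex : ℝ) (Ψ T X Cc : ℕ → ℝ)
    (hv : ∀ n : ℕ, v * Ψ n = vth * (Real.sqrt (n + 1) * Ψ (n + 1) + Real.sqrt n * Ψ (n - 1))) :
    ∀ K : ℕ,
      (∑ n ∈ Finset.range K, T n * Ψ n)
        + v * (∑ n ∈ Finset.range K, X n * Ψ n)
        + Ex * (∑ n ∈ Finset.range K, Cc n * (-(Real.sqrt (n + 1) / vth) * Ψ (n + 1)))
      = (∑ m ∈ Finset.range K,
          (T m + vth * (Real.sqrt (m + 1) * X (m + 1) + Real.sqrt m * X (m - 1))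
            - (Real.sqrt m / vth) * Ex * Cc (m - 1)) * Ψ m)
        + vth * Real.sqrt K * X (K - 1) * Ψ K
        - (Real.sqrt K / vth) * Ex * Cc (K - 1) * Ψ K
        - vth * Real.sqrt K * X K * Ψ (K - 1) := by
  intro K
  induction K with
  | zero => simp
  | succ K ih =>
    rw [Finset.sum_range_succ, Finset.sum_range_succ, Finset.sum_range_succ,
      Finset.sum_range_succ]
    simp only [Nat.add_sub_cancel]
    push_cast
    linear_combination ih + X K * hv K

/-- Truncation residual identity for the Hermite expansion: if the mode
equations hold for `0 ≤ n ≤ N−1` (with `C_{−1} = C_N = 0`), then the truncated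
expansion `f = Σ_{n<N} C_n Ψ_n` satisfies
`∂_t f + v ∂_x f + E ∂_v f = √N (v_th ∂_x C_{N−1} − (1/v_th) E C_{N−1}) Ψ_N`. -/
theorem hermite_truncation_residual
    (vth : ℝ) (hvth : 0 < vth) (N : ℕ) (hN : 1 ≤ N)
    (C : ℕ → ℝ → ℝ → ℝ) (E : ℝ → ℝ → ℝ)
    -- regularity: each `C n` is C¹ in (t,x), `E` is continuous
    (hC1 : ∀ n, ContDiff ℝ 1 (fun p : ℝ × ℝ => C n p.1 p.2))
    (hE : Continuous (fun p : ℝ × ℝ => E p.1 p.2))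
    -- truncation convention `C_N = 0` (and beyond)
    (hCtop : ∀ n, N ≤ n → C n = 0)
    -- the mode equations (the `n = 0` case of `C (n-1)` is irrelevant
    -- since `√0 = 0`)
    (hmode : ∀ n, n < N → ∀ t x,
      deriv (fun s => C n s x) t
        + vth * (Real.sqrt (n + 1) * deriv (fun y => C (n + 1) t y) x
            + Real.sqrt n * deriv (fun y => C (n - 1) t y) x)
        - (Real.sqrt n / vth) * E t x * C (n - 1) t x = 0) :
    ∀ t x v,
      deriv (fun s => ∑ n ∈ Finset.range N, C n s x * Psi vth n v) t
        + v * deriv (fun y => ∑ n ∈ Finset.range N, C n t y * Psi vth n v) x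
        + E t x * deriv (fun w => ∑ n ∈ Finset.range N, C n t x * Psi vth n w) v
      = Real.sqrt N * (vth * deriv (fun y => C (N - 1) t y) x
          - (1 / vth) * E t x * C (N - 1) t x) * Psi vth N v := by
  intro t x v
  have hvth' : vth ≠ 0 := ne_of_gt hvth
  have hCd : ∀ n, Differentiable ℝ (fun p : ℝ × ℝ => C n p.1 p.2) := fun n =>
    (hC1 n).differentiable one_ne_zero
  have hdt : ∀ n, DifferentiableAt ℝ (fun s => C n s x) t := fun n =>
    ((hCd n).comp (differentiable_id.prodMk (differentiable_const x))).differentiableAt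
  have hdx : ∀ n, DifferentiableAt ℝ (fun y => C n t y) x := fun n =>
    ((hCd n).comp ((differentiable_const t).prodMk differentiable_id)).differentiableAt
  have h1 : HasDerivAt (fun s => ∑ n ∈ Finset.range N, C n s x * Psi vth n v)
      (∑ n ∈ Finset.range N, deriv (fun s => C n s x) t * Psi vth n v) t :=
    HasDerivAt.fun_sum fun n _ => ((hdt n).hasDerivAt).mul_const _
  have h2 : HasDerivAt (fun y => ∑ n ∈ Finset.range N, C n t y * Psi vth n v)
      (∑ n ∈ Finset.range N, deriv (fun y => C n t y) x * Psi vth n v) x :=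
    HasDerivAt.fun_sum fun n _ => ((hdx n).hasDerivAt).mul_const _
  have h3 : HasDerivAt (fun w => ∑ n ∈ Finset.range N, C n t x * Psi vth n w)
      (∑ n ∈ Finset.range N, C n t x * (-(Real.sqrt (n + 1) / vth) * Psi vth (n + 1) v)) v :=
    HasDerivAt.fun_sum fun n _ => (Psi_hasDerivAt vth hvth' n v).const_mul _
  rw [h1.deriv, h2.deriv, h3.deriv]
  have hk := key_telescope vth v (E t x) (fun n => Psi vth n v)
    (fun n => deriv (fun s => C n s x) t) (fun n => deriv (fun y => C n t y) x)
    (fun n => C n t x) (fun n => v_mul_Psi vth hvth' n v) N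
  rw [hk]
  have hXN : deriv (fun y => C N t y) x = 0 := by
    rw [hCtop N le_rfl]; simp
  have hsum0 : (∑ m ∈ Finset.range N,
      (deriv (fun s => C m s x) t
        + vth * (Real.sqrt (m + 1) * deriv (fun y => C (m + 1) t y) x
            + Real.sqrt m * deriv (fun y => C (m - 1) t y) x)
        - (Real.sqrt m / vth) * E t x * C (m - 1) t x) * Psi vth m v) = 0 := by
    refine Finset.sum_eq_zero fun m hm => ?_
    rw [hmode m (Finset.mem_range.mp hm) t x, zero_mul]
  rw [hsum0, hXN]
  ring
end
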